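/- Let E be a convex (or more generally star-shaped) polygon in the plane with diameter at most h, and let d be a C² function on a neighborhood of E that vanishes at all vertices of E. If for every point x in the interior of E there is a straight segment through x with endpoints on ∂E contained in E, then |d(x)| ≤ (h²/4)·|d|_{C²(E)} for all x ∈ E, where |d|_{C²(E)} denotes the supremum of the second derivatives of d on E. -/

import Mathlib

open Set

/-- 1D Lagrange interpolation estimate, zero boundary values. -/
lemma key1d (f f' f'' : ℝ → ℝ) (K : ℝ)
    (h1 : ∀ t ∈ Icc (0:ℝ) 1, HasDerivAt f (f' t) t)
    (h2 : ∀ t ∈ Icc (0:ℝ) 1, HasDerivAt f' (f'' t) t)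
    (hK : ∀ t ∈ Icc (0:ℝ) 1, |f'' t| ≤ K)
    (hf0 : f 0 = 0) (hf1 : f 1 = 0) :
    ∀ t ∈ Icc (0:ℝ) 1, |f t| ≤ K / 8 := by
  have hK0 : 0 ≤ K := le_trans (abs_nonneg _) (hK 0 (by norm_num))
  intro t ht
  rcases eq_or_lt_of_le ht.1 with h | h0t
  · rw [← h, hf0]; simp; linarith
  rcases eq_or_lt_of_le ht.2 with h | ht1
  · rw [h, hf1]; simp; linarith
  set c := f t / (t * (1 - t)) with hc
  have htt : 0 < t * (1 - t) := by nlinarith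
  have hft : f t = c * (t * (1 - t)) := by rw [hc]; exact (div_mul_cancel₀ _ htt.ne').symm
  set φ := fun s : ℝ => f s - c * (s * (1 - s)) with hφ
  set φ' := fun s : ℝ => f' s - c * (1 - 2 * s) with hφ'
  have hdφ : ∀ s ∈ Icc (0:ℝ) 1, HasDerivAt φ (φ' s) s := by
    intro s hs
    have hq : HasDerivAt (fun s : ℝ => c * (s * (1 - s))) (c * (1 - 2 * s)) s := by
      have := (((hasDerivAt_id s).mul
        ((hasDerivAt_const s (1:ℝ)).sub (hasDerivAt_id s)))).const_mul c
      refine this.congr_deriv ?_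
      simp only [Pi.sub_apply, id_eq]; ring
    exact (h1 s hs).sub hq
  have hdφ' : ∀ s ∈ Icc (0:ℝ) 1, HasDerivAt φ' (f'' s + 2 * c) s := by
    intro s hs
    have hq : HasDerivAt (fun s : ℝ => c * (1 - 2 * s)) (-(2 * c)) s := by
      have := (((hasDerivAt_const s (1:ℝ)).sub
        ((hasDerivAt_id s).const_mul (2:ℝ)))).const_mul c
      refine this.congr_deriv ?_
      ring
    have := (h2 s hs).sub hq
    refine this.congr_deriv ?_; ring
  have hφ0 : φ 0 = 0 := by simp [hφ, hf0]
  have hφt : φ t = 0 := by simp [hφ, hft]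
  have hφ1 : φ 1 = 0 := by simp [hφ, hf1]
  have hsub1 : Icc (0:ℝ) t ⊆ Icc (0:ℝ) 1 := Icc_subset_Icc le_rfl ht.2
  have hsub2 : Icc t (1:ℝ) ⊆ Icc (0:ℝ) 1 := Icc_subset_Icc ht.1 le_rfl
  obtain ⟨ξ₁, hξ₁, hs₁⟩ := exists_hasDerivAt_eq_slope φ φ' h0t
    (fun s hs => ((hdφ s (hsub1 hs)).continuousAt).continuousWithinAt)
    (fun s hs => hdφ s (hsub1 (Ioo_subset_Icc_self hs)))
  obtain ⟨ξ₂, hξ₂, hs₂⟩ := exists_hasDerivAt_eq_slope φ φ' ht1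
    (fun s hs => ((hdφ s (hsub2 hs)).continuousAt).continuousWithinAt)
    (fun s hs => hdφ s (hsub2 (Ioo_subset_Icc_self hs)))
  have hξ₁0 : φ' ξ₁ = 0 := by rw [hs₁, hφt, hφ0]; simp
  have hξ₂0 : φ' ξ₂ = 0 := by rw [hs₂, hφt, hφ1]; simp
  have hξ12 : ξ₁ < ξ₂ := lt_trans hξ₁.2 hξ₂.1
  have hsub3 : Icc ξ₁ ξ₂ ⊆ Icc (0:ℝ) 1 :=
    Icc_subset_Icc (le_of_lt hξ₁.1) (le_of_lt hξ₂.2)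
  obtain ⟨η, hη, hsη⟩ := exists_hasDerivAt_eq_slope φ' (fun s => f'' s + 2 * c) hξ12
    (fun s hs => ((hdφ' s (hsub3 hs)).continuousAt).continuousWithinAt)
    (fun s hs => hdφ' s (hsub3 (Ioo_subset_Icc_self hs)))
  have hη0 : f'' η + 2 * c = 0 := by
    rw [hsη, hξ₁0, hξ₂0]; simp
  have hηmem : η ∈ Icc (0:ℝ) 1 := hsub3 (Ioo_subset_Icc_self hη)
  have hcb : |2 * c| ≤ K := by
    have := hK η hηmem
    have h2c : f'' η = -(2 * c) := by linarith
    rw [h2c] at this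
    simpa using this
  have habs : |c| ≤ K / 2 := by
    have h2c' : (2:ℝ) * |c| ≤ K := by rwa [abs_mul, abs_two] at hcb
    linarith
  have httq : t * (1 - t) ≤ 1 / 4 := by nlinarith [sq_nonneg (2 * t - 1)]
  calc |f t| = |c| * (t * (1 - t)) := by
        rw [hft, abs_mul, abs_of_pos htt]
    _ ≤ (K / 2) * (1 / 4) := by
        apply mul_le_mul habs httq (le_of_lt htt) (by linarith)
    _ = K / 8 := by ring

/-- 1D Lagrange interpolation estimate, general boundary values. -/
lemma key1d' (f f' f'' : ℝ → ℝ) (K : ℝ)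
    (h1 : ∀ t ∈ Icc (0:ℝ) 1, HasDerivAt f (f' t) t)
    (h2 : ∀ t ∈ Icc (0:ℝ) 1, HasDerivAt f' (f'' t) t)
    (hK : ∀ t ∈ Icc (0:ℝ) 1, |f'' t| ≤ K) :
    ∀ t ∈ Icc (0:ℝ) 1, |f t| ≤ K / 8 + max |f 0| |f 1| := by
  intro t ht
  set g := fun s : ℝ => f s - ((1 - s) * f 0 + s * f 1) with hg
  set g' := fun s : ℝ => f' s - (f 1 - f 0) with hg'
  have hdg : ∀ s ∈ Icc (0:ℝ) 1, HasDerivAt g (g' s) s := by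
    intro s hs
    have hq : HasDerivAt (fun s : ℝ => (1 - s) * f 0 + s * f 1) (f 1 - f 0) s := by
      have := (((hasDerivAt_const s (1:ℝ)).sub (hasDerivAt_id s)).mul_const (f 0)).add
        ((hasDerivAt_id s).mul_const (f 1))
      refine this.congr_deriv ?_
      ring
    exact (h1 s hs).sub hq
  have hdg' : ∀ s ∈ Icc (0:ℝ) 1, HasDerivAt g' (f'' s) s := by
    intro s hs
    exact (h2 s hs).sub_const _
  have hg0 : g 0 = 0 := by simp [hg]
  have hg1 : g 1 = 0 := by simp [hg]
  have := key1d g g' f'' K hdg hdg' hK hg0 hg1 t ht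
  have hlin : |(1 - t) * f 0 + t * f 1| ≤ max |f 0| |f 1| := by
    have h0 : 0 ≤ 1 - t := by linarith [ht.2]
    have h1' : 0 ≤ t := ht.1
    calc |(1 - t) * f 0 + t * f 1| ≤ |(1 - t) * f 0| + |t * f 1| := abs_add_le _ _
      _ = (1 - t) * |f 0| + t * |f 1| := by
          rw [abs_mul, abs_mul, abs_of_nonneg h0, abs_of_nonneg h1']
      _ ≤ (1 - t) * max |f 0| |f 1| + t * max |f 0| |f 1| := by
          gcongr
          · exact le_max_left _ _
          · exact le_max_right _ _
      _ = max |f 0| |f 1| := by ring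
  calc |f t| = |g t + ((1 - t) * f 0 + t * f 1)| := by rw [hg]; ring_nf
    _ ≤ |g t| + |(1 - t) * f 0 + t * f 1| := abs_add_le _ _
    _ ≤ K / 8 + max |f 0| |f 1| := add_le_add this hlin

theorem polygon_distance_bound
    (V : Finset (EuclideanSpace ℝ (Fin 2))) (E : Set (EuclideanSpace ℝ (Fin 2)))
    (hE : E = convexHull ℝ (V : Set (EuclideanSpace ℝ (Fin 2))))
    (h M : ℝ) (hh : 0 < h) (hM0 : 0 ≤ M)
    (hdiam : Metric.diam E ≤ h)
    (d : EuclideanSpace ℝ (Fin 2) → ℝ)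
    (U : Set (EuclideanSpace ℝ (Fin 2))) (hU : IsOpen U) (hEU : E ⊆ U)
    (hd : ContDiffOn ℝ 2 d U)
    (hvanish : ∀ v ∈ V, d v = 0)
    (hedges : ∀ x ∈ frontier E, ∃ p ∈ V, ∃ q ∈ V,
      x ∈ segment ℝ p q ∧ segment ℝ p q ⊆ frontier E)
    (hchord : ∀ x ∈ interior E, ∃ p q, p ∈ frontier E ∧ q ∈ frontier E ∧
      x ∈ segment ℝ p q ∧ segment ℝ p q ⊆ E)
    (hM : ∀ x ∈ E, ‖iteratedFDeriv ℝ 2 d x‖ ≤ M) :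
    ∀ x ∈ E, |d x| ≤ h ^ 2 / 4 * M := by
  have hcompact : IsCompact E := by
    rw [hE]; exact V.finite_toSet.isCompact_convexHull ℝ
  have hclosed : IsClosed E := hcompact.isClosed
  have hbdd : Bornology.IsBounded E := hcompact.isBounded
  have hDd : ContDiffOn ℝ 1 (fun x => fderiv ℝ d x) U :=
    hd.fderiv_of_isOpen hU (by norm_num)
  -- chord estimate
  have chord : ∀ p q : EuclideanSpace ℝ (Fin 2), segment ℝ p q ⊆ E →
      ∀ x ∈ segment ℝ p q, |d x| ≤ M * h ^ 2 / 8 + max |d p| |d q| := by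
    intro p q hseg x hx
    set v := q - p with hv
    set γ := fun t : ℝ => p + t • v with hγ
    have hmemE : ∀ t ∈ Icc (0:ℝ) 1, γ t ∈ E := by
      intro t ht
      apply hseg
      rw [segment_eq_image']
      exact ⟨t, ht, rfl⟩
    have hmemU : ∀ t ∈ Icc (0:ℝ) 1, γ t ∈ U := fun t ht => hEU (hmemE t ht)
    have hγ' : ∀ t : ℝ, HasDerivAt γ v t := by
      intro t
      have := ((hasDerivAt_id t).smul_const v).const_add p
      exact this.congr_deriv (one_smul _ _)
    set f := fun t : ℝ => d (γ t) with hf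
    set f' := fun t : ℝ => fderiv ℝ d (γ t) v with hf'
    set f'' := fun t : ℝ => fderiv ℝ (fun x => fderiv ℝ d x) (γ t) v v with hf''
    have h1 : ∀ t ∈ Icc (0:ℝ) 1, HasDerivAt f (f' t) t := by
      intro t ht
      have hdiff : DifferentiableAt ℝ d (γ t) :=
        (hd.contDiffAt (hU.mem_nhds (hmemU t ht))).differentiableAt two_ne_zero
      exact hdiff.hasFDerivAt.comp_hasDerivAt t (hγ' t)
    have h2 : ∀ t ∈ Icc (0:ℝ) 1, HasDerivAt f' (f'' t) t := by
      intro t ht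
      have hdiff2 : DifferentiableAt ℝ (fun x => fderiv ℝ d x) (γ t) :=
        (hDd.contDiffAt (hU.mem_nhds (hmemU t ht))).differentiableAt one_ne_zero
      have hcomp : HasDerivAt (fun t => fderiv ℝ d (γ t))
          (fderiv ℝ (fun x => fderiv ℝ d x) (γ t) v) t :=
        hdiff2.hasFDerivAt.comp_hasDerivAt t (hγ' t)
      have := hcomp.clm_apply (hasDerivAt_const t v)
      simpa using this
    have hvnorm : ‖v‖ ≤ h := by
      have hp : p ∈ E := by
        have := hmemE 0 (by norm_num)
        simpa [hγ] using this
      have hq : q ∈ E := by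
        have := hmemE 1 (by norm_num)
        simpa [hγ, hv] using this
      have := Metric.dist_le_diam_of_mem hbdd hq hp
      rw [dist_eq_norm] at this
      exact le_trans this hdiam
    have hKb : ∀ t ∈ Icc (0:ℝ) 1, |f'' t| ≤ M * h ^ 2 := by
      intro t ht
      have hxE : γ t ∈ E := hmemE t ht
      have heq : f'' t = iteratedFDeriv ℝ 2 d (γ t) ![v, v] := by
        rw [iteratedFDeriv_two_apply]
        simp only [Matrix.cons_val_zero, Matrix.cons_val_one, Matrix.head_cons]
        rfl
      have hop := (iteratedFDeriv ℝ 2 d (γ t)).le_opNorm ![v, v]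
      have hprod : ∏ i, ‖(![v, v] : Fin 2 → EuclideanSpace ℝ (Fin 2)) i‖ = ‖v‖ * ‖v‖ := by
        simp [Fin.prod_univ_two]
      rw [hprod] at hop
      have hb : ‖iteratedFDeriv ℝ 2 d (γ t)‖ * (‖v‖ * ‖v‖) ≤ M * h ^ 2 := by
        have hn := norm_nonneg v
        have h1 : ‖iteratedFDeriv ℝ 2 d (γ t)‖ * (‖v‖ * ‖v‖) ≤ M * (h * h) :=
          mul_le_mul (hM (γ t) hxE)
            (mul_le_mul hvnorm hvnorm hn hh.le)
            (mul_nonneg hn hn) hM0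
        linarith [sq_abs h, sq h ▸ h1, (by ring : h * h = h ^ 2) ▸ h1]
      calc |f'' t| = ‖iteratedFDeriv ℝ 2 d (γ t) ![v, v]‖ := by
            rw [heq]; exact (Real.norm_eq_abs _).symm
        _ ≤ ‖iteratedFDeriv ℝ 2 d (γ t)‖ * (‖v‖ * ‖v‖) := hop
        _ ≤ M * h ^ 2 := hb
    -- get parameter for x
    rw [segment_eq_image'] at hx
    obtain ⟨t, ht, hxt⟩ := hx
    have hkey := key1d' f f' f'' (M * h ^ 2) h1 h2 hKb t ht
    have hf0 : f 0 = d p := by simp [hf, hγ]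
    have hf1 : f 1 = d q := by simp [hf, hγ, hv]
    have hftx : f t = d x := by rw [hf, ← hxt]
    rw [hf0, hf1, hftx] at hkey
    exact hkey
  -- boundary estimate
  have hbdry : ∀ x ∈ frontier E, |d x| ≤ M * h ^ 2 / 8 := by
    intro x hx
    obtain ⟨p, hp, q, hq, hxpq, hseg⟩ := hedges x hx
    have hsegE : segment ℝ p q ⊆ E := hseg.trans hclosed.frontier_subset
    have := chord p q hsegE x hxpq
    rw [hvanish p hp, hvanish q hq] at this
    simpa using this
  intro x hx
  have hx' : x ∈ interior E ∪ frontier E := by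
    rw [← closure_eq_interior_union_frontier]
    exact subset_closure hx
  rcases hx' with hxi | hxf
  · obtain ⟨p, q, hpf, hqf, hxpq, hseg⟩ := hchord x hxi
    have hkey := chord p q hseg x hxpq
    have hpb := hbdry p hpf
    have hqb := hbdry q hqf
    have hmax : max |d p| |d q| ≤ M * h ^ 2 / 8 := max_le hpb hqb
    have : |d x| ≤ M * h ^ 2 / 8 + M * h ^ 2 / 8 := le_trans hkey (by linarith)
    linarith
  · have := hbdry x hxf
    nlinarith [sq_nonneg h]
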